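/- Let ε > 0 be such that 1/ε ≥ 3 is an integer. For every OOEBP instance I with n ≥ 1 items of sizes in (0,1], if there exists a feasible packing of I using m bins in which every exceeding item has size at least ε², then there exists a nice feasible packing of I using at most (1+ε)·m + 1/ε bins. -/

import Mathlib

open scoped BigOperators Classical

namespace OOEBP

noncomputable section

/-- Load of bin `b` under packing `p` of instance `s`. -/
def binLoad (s : List ℝ) (p : ℕ → ℕ) (b : ℕ) : ℝ :=
  ∑ j ∈ Finset.range s.length, if p j = b then s.getD j 0 else 0

/-- A packing is feasible if each item is placed into a bin whose current
load (total size of earlier items in the same bin) is strictly below 1. -/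
def Feasible (s : List ℝ) (p : ℕ → ℕ) : Prop :=
  ∀ i < s.length,
    (∑ j ∈ Finset.range i, if p j = p i then s.getD j 0 else 0) < 1

/-- The cost of a packing: the number of nonempty bins. -/
def cost (s : List ℝ) (p : ℕ → ℕ) : ℕ :=
  ((Finset.range s.length).image p).card

/-- Optimal cost of a feasible packing of `s`. -/
def OPT (s : List ℝ) : ℕ :=
  sInf {m | ∃ p, Feasible s p ∧ cost s p = m}

/-- Item `i` is the exceeding item of its bin: the bin's total size is at
least 1 and `i` is the item of maximum index in its bin. -/
def IsExceeding (s : List ℝ) (p : ℕ → ℕ) (i : ℕ) : Prop :=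
  i < s.length ∧ 1 ≤ binLoad s p (p i) ∧
    ∀ j, i < j → j < s.length → p j ≠ p i


section Aux

variable (s : List ℝ) (p : ℕ → ℕ)

/-- Sorted list of indices of exceeding items. -/
def exList : List ℕ :=
  ((Finset.range s.length).filter (fun i => IsExceeding s p i)).sort (· ≤ ·)

/-- Number of exceeding items. -/
def exM : ℕ := (exList s p).length

/-- Group size. -/
def exg (k : ℕ) : ℕ := (exM s p + k - 1) / k

/-- `r`-th exceeding item index. -/
def getL (r : ℕ) : ℕ := (exList s p).getD r 0

/-- The exceeding item of the bin of item `j` (if any). -/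
def wit (j : ℕ) : ℕ :=
  if h : ∃ i, IsExceeding s p i ∧ p i = p j then h.choose else 0

/-- The new packing. -/
def pack (k : ℕ) (j : ℕ) : ℕ :=
  if IsExceeding s p j then
    (if exg s p k ≤ (exList s p).idxOf j then
        2 * ((exList s p).idxOf j - exg s p k) + 1
      else 2 * (exM s p + (exList s p).idxOf j) + 1)
  else if ∃ i, IsExceeding s p i ∧ p i = p j then
    2 * (exList s p).idxOf (wit s p j) + 1
  else 2 * p j

lemma mem_exList {i : ℕ} : i ∈ exList s p ↔ IsExceeding s p i := by
  simp [exList, Finset.mem_sort, Finset.mem_filter, Finset.mem_range]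
  intro h; exact h.1

lemma exc_uniq {i i' : ℕ} (hi : IsExceeding s p i) (hi' : IsExceeding s p i')
    (hpp : p i = p i') : i = i' := by
  rcases Nat.lt_trichotomy i i' with h | h | h
  · exact absurd hpp.symm (hi.2.2 i' h hi'.1)
  · exact h
  · exact absurd hpp (hi'.2.2 i h hi.1)

lemma getL_exc {r : ℕ} (hr : r < exM s p) : IsExceeding s p (getL s p r) := by
  rw [← mem_exList s p]
  rw [getL, List.getD_eq_getElem _ _ hr]
  exact List.getElem_mem _

lemma getL_strict {r r' : ℕ} (h : r < r') (hr' : r' < exM s p) :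
    getL s p r < getL s p r' := by
  have hsrt : (exList s p).Pairwise (· ≤ ·) := Finset.pairwise_sort _ _
  have hnd : (exList s p).Nodup := Finset.sort_nodup _ _
  have hr : r < exM s p := lt_trans h hr'
  rw [getL, getL, List.getD_eq_getElem _ _ hr, List.getD_eq_getElem _ _ hr']
  have hle : (exList s p)[r] ≤ (exList s p)[r'] := by
    have := List.pairwise_iff_getElem.mp hsrt r r' hr hr' h
    exact this
  rcases lt_or_eq_of_le hle with h1 | h1
  · exact h1
  · exfalso
    have := (List.Nodup.getElem_inj_iff hnd).mp h1
    omega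

lemma getL_mono {r r' : ℕ} (h : r ≤ r') (hr' : r' < exM s p) :
    getL s p r ≤ getL s p r' := by
  rcases lt_or_eq_of_le h with h1 | h1
  · exact le_of_lt (getL_strict s p h1 hr')
  · subst h1; rfl

lemma indexOf_getL {r : ℕ} (hr : r < exM s p) :
    (exList s p).idxOf (getL s p r) = r := by
  have hnd : (exList s p).Nodup := Finset.sort_nodup _ _
  rw [getL, List.getD_eq_getElem _ _ hr]
  exact List.Nodup.idxOf_getElem hnd r hr

lemma getL_indexOf {i : ℕ} (hi : IsExceeding s p i) :
    (exList s p).idxOf i < exM s p ∧ getL s p ((exList s p).idxOf i) = i := by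
  have hm : i ∈ exList s p := (mem_exList s p).mpr hi
  have h1 : (exList s p).idxOf i < exM s p := List.idxOf_lt_length_iff.mpr hm
  refine ⟨h1, ?_⟩
  rw [getL, List.getD_eq_getElem _ _ h1]
  exact List.idxOf_get (l := exList s p) h1

lemma wit_spec {j : ℕ} (h : ∃ i, IsExceeding s p i ∧ p i = p j) :
    IsExceeding s p (wit s p j) ∧ p (wit s p j) = p j := by
  rw [wit, dif_pos h]
  exact h.choose_spec

lemma exists_exc_of_load {i : ℕ} (hi : i < s.length) (h : 1 ≤ binLoad s p (p i)) :
    ∃ w, IsExceeding s p w ∧ p w = p i := by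
  set T := (Finset.range s.length).filter (fun j => p j = p i) with hT
  have hiT : i ∈ T := by simp [hT, hi]
  have hne : T.Nonempty := ⟨i, hiT⟩
  set w := T.max' hne with hw
  have hwT : w ∈ T := T.max'_mem hne
  have hwn : w < s.length := by simpa [hT] using (Finset.mem_filter.mp hwT).1
  have hwp : p w = p i := (Finset.mem_filter.mp hwT).2
  refine ⟨w, ⟨hwn, ?_, ?_⟩, hwp⟩
  · rwa [hwp]
  · intro j hj1 hj2 hj3
    have : j ∈ T := by simp [hT, hj2]; rw [← hwp]; exact hj3
    have := T.le_max' j this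
    omega

lemma lt_of_nonexc_mem {w j : ℕ} (hw : IsExceeding s p w) (hj : j < s.length)
    (hpp : p j = p w) (hne : ¬ IsExceeding s p j) : j < w := by
  rcases Nat.lt_trichotomy j w with h | h | h
  · exact h
  · exfalso; apply hne; rwa [h]
  · exact absurd hpp (hw.2.2 j h hj)

/-- Membership in a new bin `2r+1` with `r < M`. -/
lemma mem_newbin {k j r : ℕ} (hj : j < s.length) (hr : r < exM s p)
    (hq : pack s p k j = 2 * r + 1) :
    (¬ IsExceeding s p j ∧ p j = p (getL s p r) ∧ j < getL s p r) ∨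
    (IsExceeding s p j ∧ r + exg s p k < exM s p ∧ j = getL s p (r + exg s p k)) := by
  by_cases hexc : IsExceeding s p j
  · rw [pack, if_pos hexc] at hq
    obtain ⟨hidx, hget⟩ := getL_indexOf s p hexc
    by_cases hg : exg s p k ≤ (exList s p).idxOf j
    · rw [if_pos hg] at hq
      have : (exList s p).idxOf j = r + exg s p k := by omega
      right
      exact ⟨hexc, by omega, by rw [← this, hget]⟩
    · rw [if_neg hg] at hq
      omega
  · rw [pack, if_neg hexc] at hq
    by_cases hb : ∃ i, IsExceeding s p i ∧ p i = p j
    · rw [if_pos hb] at hq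
      obtain ⟨hwexc, hwp⟩ := wit_spec s p hb
      obtain ⟨hwidx, hwget⟩ := getL_indexOf s p hwexc
      have hri : (exList s p).idxOf (wit s p j) = r := by omega
      have hgw : getL s p r = wit s p j := by rw [← hri, hwget]
      left
      refine ⟨hexc, by rw [hgw, hwp], ?_⟩
      rw [hgw]
      exact lt_of_nonexc_mem s p hwexc hj hwp.symm hexc
    · rw [if_neg hb] at hq
      omega

/-- Membership in a singleton bin `2(M+r)+1`. -/
lemma mem_singbin {k j r : ℕ} (hj : j < s.length)
    (hq : pack s p k j = 2 * (exM s p + r) + 1) : j = getL s p r ∧ r < exM s p := by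
  by_cases hexc : IsExceeding s p j
  · rw [pack, if_pos hexc] at hq
    obtain ⟨hidx, hget⟩ := getL_indexOf s p hexc
    by_cases hg : exg s p k ≤ (exList s p).idxOf j
    · rw [if_pos hg] at hq
      omega
    · rw [if_neg hg] at hq
      have : (exList s p).idxOf j = r := by omega
      exact ⟨by rw [← this, hget], by omega⟩
  · rw [pack, if_neg hexc] at hq
    by_cases hb : ∃ i, IsExceeding s p i ∧ p i = p j
    · rw [if_pos hb] at hq
      obtain ⟨hwexc, hwp⟩ := wit_spec s p hb
      obtain ⟨hwidx, hwget⟩ := getL_indexOf s p hwexc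
      omega
    · rw [if_neg hb] at hq
      omega

/-- Even values of pack. -/
lemma mem_evenbin {k j c : ℕ} (hq : pack s p k j = 2 * c) :
    (¬ ∃ i, IsExceeding s p i ∧ p i = p j) ∧ p j = c := by
  by_cases hexc : IsExceeding s p j
  · rw [pack, if_pos hexc] at hq
    by_cases hg : exg s p k ≤ (exList s p).idxOf j
    · rw [if_pos hg] at hq; omega
    · rw [if_neg hg] at hq; omega
  · rw [pack, if_neg hexc] at hq
    by_cases hb : ∃ i, IsExceeding s p i ∧ p i = p j
    · rw [if_pos hb] at hq; omega
    · rw [if_neg hb] at hq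
      exact ⟨hb, by omega⟩


lemma sum_ite_le (T : Finset ℕ) (A B : ℕ → Prop) [DecidablePred A] [DecidablePred B]
    (f : ℕ → ℝ) (h : ∀ j ∈ T, A j → B j) (hf : ∀ j ∈ T, 0 ≤ f j) :
    ∑ j ∈ T, (if A j then f j else 0) ≤ ∑ j ∈ T, (if B j then f j else 0) := by
  apply Finset.sum_le_sum
  intro j hj
  by_cases hA : A j
  · rw [if_pos hA, if_pos (h j hj hA)]
  · rw [if_neg hA]
    by_cases hB : B j
    · rw [if_pos hB]; exact hf j hj
    · rw [if_neg hB]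

lemma sum_window (b : ℕ) (f : ℕ → ℝ) (a w : ℕ) (hf : ∀ j, j < w → 0 ≤ f j) :
    ∑ j ∈ Finset.range a, (if p j = b ∧ j < w then f j else 0) ≤
      ∑ j ∈ Finset.range w, (if p j = b then f j else 0) := by
  have h1 : ∑ j ∈ Finset.range a ∩ Finset.range w, (if p j = b ∧ j < w then f j else 0)
      = ∑ j ∈ Finset.range a, (if p j = b ∧ j < w then f j else 0) := by
    apply Finset.sum_subset Finset.inter_subset_left
    intro x hx hx2
    rw [if_neg]
    rintro ⟨-, hxw⟩
    exact hx2 (Finset.mem_inter.mpr ⟨hx, Finset.mem_range.mpr hxw⟩)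
  rw [← h1]
  have h2 : ∑ j ∈ Finset.range a ∩ Finset.range w, (if p j = b ∧ j < w then f j else 0)
      = ∑ j ∈ Finset.range a ∩ Finset.range w, (if p j = b then f j else 0) := by
    apply Finset.sum_congr rfl
    intro x hx
    have : x < w := Finset.mem_range.mp (Finset.mem_inter.mp hx).2
    by_cases hb : p x = b
    · rw [if_pos ⟨hb, this⟩, if_pos hb]
    · rw [if_neg (by tauto), if_neg hb]
  rw [h2]
  apply Finset.sum_le_sum_of_subset_of_nonneg Finset.inter_subset_right
  intro j hj _
  by_cases hb : p j = b
  · rw [if_pos hb]; exact hf j (Finset.mem_range.mp hj)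
  · rw [if_neg hb]


lemma lt_mul_div_succ (a b : ℕ) (hb : 0 < b) : a < (a / b + 1) * b := by
  have h1 := Nat.div_add_mod a b
  have h2 := Nat.mod_lt a hb
  have h3 : (a / b + 1) * b = b * (a / b) + b := by ring
  omega

end Aux

/-- if there is a feasible packing with `m` bins in which every
exceeding item has size at least `ε²`, then there is a *nice* feasible packing
(every exceeding item of size at least `ε²`, and admitting a certificate)
with at most `(1+ε)·m + 1/ε` bins. -/
theorem stmt1 (ε : ℝ) (k : ℕ) (hk : 3 ≤ k) (hεk : ε = 1 / k)
    (s : List ℝ) (hn : 1 ≤ s.length) (hs : ∀ x ∈ s, 0 < x ∧ x ≤ 1)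
    (p : ℕ → ℕ) (hp : Feasible s p)
    (hexc : ∀ i, IsExceeding s p i → ε ^ 2 ≤ s.getD i 0)
    (m : ℕ) (hm : cost s p = m) :
    ∃ q : ℕ → ℕ, Feasible s q ∧
      (∀ i, IsExceeding s q i → ε ^ 2 ≤ s.getD i 0) ∧
      (∃ e : ℕ → ℕ, e 0 = 0 ∧ 0 < e 1 ∧
        (∀ a b, a ≤ b → b ≤ k → e a ≤ e b) ∧ e k = s.length ∧
        ∀ i, IsExceeding s q i →
          ∃ t ≤ k, e t ≤ i ∧ ∀ j < s.length, q j = q i → j ≠ i → j < e t) ∧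
      (cost s q : ℝ) ≤ (1 + ε) * m + 1 / ε := by
  classical
  have hk0 : 0 < k := by omega
  have hsz0 : ∀ j, j < s.length → (0:ℝ) ≤ s.getD j 0 := by
    intro j hj
    rw [List.getD_eq_getElem _ _ hj]
    exact (hs _ (List.getElem_mem _)).1.le
  -- Feasibility of the new packing
  have hfeas : Feasible s (pack s p k) := by
    intro i hi
    by_cases hexci : IsExceeding s p i
    · obtain ⟨hidx, hget⟩ := getL_indexOf s p hexci
      by_cases hgle : exg s p k ≤ (exList s p).idxOf i
      · have hqv : pack s p k i = 2 * ((exList s p).idxOf i - exg s p k) + 1 := by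
          rw [pack, if_pos hexci, if_pos hgle]
        have hrM : (exList s p).idxOf i - exg s p k < exM s p :=
          lt_of_le_of_lt (Nat.sub_le _ _) hidx
        have hwexc := getL_exc s p hrM
        have hwn : getL s p ((exList s p).idxOf i - exg s p k) < s.length := hwexc.1
        calc ∑ j ∈ Finset.range i, (if pack s p k j = pack s p k i then s.getD j 0 else 0)
            ≤ ∑ j ∈ Finset.range i,
                (if p j = p (getL s p ((exList s p).idxOf i - exg s p k)) ∧
                    j < getL s p ((exList s p).idxOf i - exg s p k)
                  then s.getD j 0 else 0) := by
              apply sum_ite_le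
              · intro j hj hA
                have hjn : j < s.length := lt_trans (Finset.mem_range.mp hj) hi
                have hqj : pack s p k j = 2 * ((exList s p).idxOf i - exg s p k) + 1 := by
                  rw [hA, hqv]
                rcases mem_newbin s p hjn hrM hqj with ⟨_, h1, h2⟩ | ⟨_, h1, h2⟩
                · exact ⟨h1, h2⟩
                · exfalso
                  have he : (exList s p).idxOf i - exg s p k + exg s p k
                      = (exList s p).idxOf i := by omega
                  rw [he, hget] at h2
                  have := Finset.mem_range.mp hj; omega
              · intro j hj; exact hsz0 j (lt_trans (Finset.mem_range.mp hj) hi)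
          _ ≤ ∑ j ∈ Finset.range (getL s p ((exList s p).idxOf i - exg s p k)),
                (if p j = p (getL s p ((exList s p).idxOf i - exg s p k)) then s.getD j 0 else 0) :=
              sum_window p _ _ _ _ (fun j hj => hsz0 j (lt_trans hj hwn))
          _ < 1 := hp _ hwn
      · have hqv : pack s p k i = 2 * (exM s p + (exList s p).idxOf i) + 1 := by
          rw [pack, if_pos hexci, if_neg hgle]
        have hz : ∑ j ∈ Finset.range i, (if pack s p k j = pack s p k i then s.getD j 0 else 0) = 0 := by
          apply Finset.sum_eq_zero
          intro j hj
          rw [if_neg]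
          intro hA
          have hjn : j < s.length := lt_trans (Finset.mem_range.mp hj) hi
          obtain ⟨h1, h2⟩ := mem_singbin s p hjn (by rw [hA, hqv])
          rw [hget] at h1
          have := Finset.mem_range.mp hj; omega
        rw [hz]; norm_num
    · by_cases hb : ∃ i', IsExceeding s p i' ∧ p i' = p i
      · obtain ⟨hwexc, hwp⟩ := wit_spec s p hb
        obtain ⟨hwidx, hwget⟩ := getL_indexOf s p hwexc
        have hqv : pack s p k i = 2 * (exList s p).idxOf (wit s p i) + 1 := by
          rw [pack, if_neg hexci, if_pos hb]
        have hiw : i < wit s p i := lt_of_nonexc_mem s p hwexc hi hwp.symm hexci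
        calc ∑ j ∈ Finset.range i, (if pack s p k j = pack s p k i then s.getD j 0 else 0)
            ≤ ∑ j ∈ Finset.range i, (if p j = p i then s.getD j 0 else 0) := by
              apply sum_ite_le
              · intro j hj hA
                have hjn : j < s.length := lt_trans (Finset.mem_range.mp hj) hi
                have hqj : pack s p k j = 2 * (exList s p).idxOf (wit s p i) + 1 := by
                  rw [hA, hqv]
                rcases mem_newbin s p hjn hwidx hqj with ⟨_, h1, h2⟩ | ⟨_, h1, h2⟩
                · rw [hwget] at h1
                  exact h1.trans hwp
                · exfalso
                  have h3 := getL_mono s p (Nat.le_add_right ((exList s p).idxOf (wit s p i)) (exg s p k)) h1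
                  rw [hwget] at h3
                  have := Finset.mem_range.mp hj; omega
              · intro j hj; exact hsz0 j (lt_trans (Finset.mem_range.mp hj) hi)
          _ < 1 := hp i hi
      · have hqv : pack s p k i = 2 * p i := by rw [pack, if_neg hexci, if_neg hb]
        calc ∑ j ∈ Finset.range i, (if pack s p k j = pack s p k i then s.getD j 0 else 0)
            ≤ ∑ j ∈ Finset.range i, (if p j = p i then s.getD j 0 else 0) := by
              apply sum_ite_le
              · intro j hj hA
                exact (mem_evenbin s p (k := k) (by rw [hA, hqv])).2
              · intro j hj; exact hsz0 j (lt_trans (Finset.mem_range.mp hj) hi)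
          _ < 1 := hp i hi
  -- Every exceeding item of the new packing was exceeding in the old one
  have hkey : ∀ i, IsExceeding s (pack s p k) i → IsExceeding s p i := by
    intro i hqi
    obtain ⟨hi, hload, hmax⟩ := hqi
    by_contra hexci
    by_cases hb : ∃ i', IsExceeding s p i' ∧ p i' = p i
    · obtain ⟨hwexc, hwp⟩ := wit_spec s p hb
      obtain ⟨hwidx, hwget⟩ := getL_indexOf s p hwexc
      have hqv : pack s p k i = 2 * (exList s p).idxOf (wit s p i) + 1 := by
        rw [pack, if_neg hexci, if_pos hb]
      have hiw : i < wit s p i := lt_of_nonexc_mem s p hwexc hi hwp.symm hexci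
      by_cases hrg : (exList s p).idxOf (wit s p i) + exg s p k < exM s p
      · have hjexc := getL_exc s p hrg
        have hjq : pack s p k (getL s p ((exList s p).idxOf (wit s p i) + exg s p k))
            = 2 * (exList s p).idxOf (wit s p i) + 1 := by
          have h1 := indexOf_getL s p hrg
          rw [pack, if_pos hjexc, h1, if_pos (Nat.le_add_left _ _), Nat.add_sub_cancel]
        have hij : i < getL s p ((exList s p).idxOf (wit s p i) + exg s p k) := by
          have h3 := getL_mono s p (Nat.le_add_right ((exList s p).idxOf (wit s p i)) (exg s p k)) hrg
          rw [hwget] at h3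
          omega
        exact hmax _ hij hjexc.1 (by rw [hjq, hqv])
      · have hle : binLoad s (pack s p k) (pack s p k i)
            ≤ ∑ j ∈ Finset.range (wit s p i), (if p j = p (wit s p i) then s.getD j 0 else 0) := by
          rw [binLoad]
          calc ∑ j ∈ Finset.range s.length, (if pack s p k j = pack s p k i then s.getD j 0 else 0)
              ≤ ∑ j ∈ Finset.range s.length,
                  (if p j = p (wit s p i) ∧ j < wit s p i then s.getD j 0 else 0) := by
                apply sum_ite_le
                · intro j hj hA
                  have hjn : j < s.length := Finset.mem_range.mp hj
                  have hqj : pack s p k j = 2 * (exList s p).idxOf (wit s p i) + 1 := by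
                    rw [hA, hqv]
                  rcases mem_newbin s p hjn hwidx hqj with ⟨_, h1, h2⟩ | ⟨_, h1, h2⟩
                  · rw [hwget] at h1 h2
                    exact ⟨h1, h2⟩
                  · exact absurd h1 hrg
                · intro j hj; exact hsz0 j (Finset.mem_range.mp hj)
            _ ≤ _ := sum_window p _ _ _ _ (fun j hj => hsz0 j (lt_trans hj hwexc.1))
        have h4 := hp (wit s p i) hwexc.1
        linarith
    · have hqv : pack s p k i = 2 * p i := by rw [pack, if_neg hexci, if_neg hb]
      have hle : binLoad s (pack s p k) (pack s p k i) ≤ binLoad s p (p i) := by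
        rw [binLoad, binLoad]
        apply sum_ite_le
        · intro j hj hA
          exact (mem_evenbin s p (k := k) (by rw [hA, hqv])).2
        · intro j hj; exact hsz0 j (Finset.mem_range.mp hj)
      obtain ⟨w, hw1, hw2⟩ := exists_exc_of_load s p hi (le_trans hload hle)
      exact hb ⟨w, hw1, hw2⟩
  -- the certificate
  set e : ℕ → ℕ := fun t => if t = 0 then 0 else if k ≤ t then s.length
      else max 1 (getL s p (min (t * exg s p k - 1) (exM s p - 1))) with he
  refine ⟨pack s p k, hfeas, fun i hi => hexc i (hkey i hi), ⟨e, ?_, ?_, ?_, ?_, ?_⟩, ?_⟩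
  · simp [he]
  · simp only [he]
    rw [if_neg one_ne_zero]
    split_ifs with h2
    · omega
    · exact Nat.lt_of_lt_of_le Nat.one_pos (le_max_left _ _)
  · intro a b hab hbk
    simp only [he]
    by_cases ha0 : a = 0
    · simp [ha0]
    · have hb0 : b ≠ 0 := by omega
      rw [if_neg ha0, if_neg hb0]
      by_cases hka : k ≤ a
      · rw [if_pos hka, if_pos (le_trans hka hab)]
      · rw [if_neg hka]
        by_cases hM0 : exM s p = 0
        · have hnil : exList s p = [] := List.length_eq_zero_iff.mp hM0
          by_cases hkb : k ≤ b
          · rw [if_pos hkb]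
            simp [getL, hnil, hn]
          · rw [if_neg hkb]
            simp [getL, hnil]
        · have hlt : ∀ c : ℕ, min c (exM s p - 1) < exM s p := by intro c; omega
          by_cases hkb : k ≤ b
          · rw [if_pos hkb]
            apply max_le hn
            exact le_of_lt (getL_exc s p (hlt _)).1
          · rw [if_neg hkb]
            apply max_le (le_max_left _ _)
            refine le_trans (getL_mono s p ?_ (hlt _)) (le_max_right _ _)
            have : a * exg s p k ≤ b * exg s p k := Nat.mul_le_mul_right _ hab
            omega
  · simp only [he]
    rw [if_neg (by omega : ¬ k = 0), if_pos le_rfl]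
  · intro i hqi
    have hpe := hkey i hqi
    obtain ⟨hidx, hget⟩ := getL_indexOf s p hpe
    by_cases hgle : exg s p k ≤ (exList s p).idxOf i
    · -- main case: certificate value t = (idx - g)/g + 1
      have hMpos : 0 < exM s p := by omega
      have hgpos : 0 < exg s p k := by
        have : 1 ≤ (exM s p + k - 1) / k := (Nat.one_le_div_iff hk0).mpr (by omega)
        exact this
      have hMkg : exM s p ≤ k * exg s p k := by
        have h1 : exM s p + k - 1 < ((exM s p + k - 1) / k + 1) * k :=
          lt_mul_div_succ _ _ hk0
        have h2 : ((exM s p + k - 1) / k + 1) * k = k * exg s p k + k := by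
          show _ = k * ((exM s p + k - 1) / k) + k
          ring
        rw [h2] at h1
        omega
      set r := (exList s p).idxOf i - exg s p k with hr
      have hrM : r < exM s p := lt_of_le_of_lt (Nat.sub_le _ _) hidx
      set t := r / exg s p k + 1 with ht
      have ht0 : t ≠ 0 := by rw [ht]; exact Nat.succ_ne_zero _
      have htg_hi : r < t * exg s p k := lt_mul_div_succ _ _ hgpos
      have htg_lo : t * exg s p k ≤ r + exg s p k := by
        rw [ht, add_mul, one_mul]
        exact Nat.add_le_add_right (Nat.div_mul_le_self r _) _
      have htg_idx : t * exg s p k ≤ (exList s p).idxOf i := by omega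
      have htk : t < k := by
        by_contra hcon
        push_neg at hcon
        have h5 : k * exg s p k ≤ t * exg s p k := by
          have := Nat.mul_le_mul_right (exg s p k) hcon
          exact this
        omega
      have hmin : min (t * exg s p k - 1) (exM s p - 1) = t * exg s p k - 1 := by omega
      have hetv : e t = max 1 (getL s p (t * exg s p k - 1)) := by
        simp only [he]
        rw [if_neg ht0, if_neg (by omega : ¬ k ≤ t), hmin]
      have hcM : t * exg s p k - 1 < exM s p := by omega
      have hqv : pack s p k i = 2 * r + 1 := by
        rw [pack, if_pos hpe, if_pos hgle, ← hr]
      refine ⟨t, le_of_lt htk, ?_, ?_⟩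
      · -- e t ≤ i
        rw [hetv]
        apply max_le
        · have h01 := getL_strict s p (show 0 < (exList s p).idxOf i by omega) hidx
          omega
        · have := getL_mono s p (show t * exg s p k - 1 ≤ (exList s p).idxOf i by omega) hidx
          rw [hget] at this
          exact this
      · intro j hj hqj hne
        rcases mem_newbin s p hj hrM (by rw [hqj, hqv]) with ⟨_, h1, h2⟩ | ⟨_, h1, h2⟩
        · have h3 : getL s p r ≤ getL s p (t * exg s p k - 1) :=
            getL_mono s p (by omega) hcM
          rw [hetv]
          have h4 := le_max_right 1 (getL s p (t * exg s p k - 1))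
          omega
        · exfalso
          have h5 : r + exg s p k = (exList s p).idxOf i := by omega
          rw [h5, hget] at h2
          exact hne h2
    · -- singleton case : t = 0
      have hqv : pack s p k i = 2 * (exM s p + (exList s p).idxOf i) + 1 := by
        rw [pack, if_pos hpe, if_neg hgle]
      refine ⟨0, by omega, by simp [he], ?_⟩
      intro j hj hqj hne
      exfalso
      obtain ⟨h1, h2⟩ := mem_singbin s p hj (by rw [hqj, hqv])
      rw [hget] at h1
      exact hne h1
  · -- the cost bound
    have hMcard : ((Finset.range s.length).filter (fun i => IsExceeding s p i)).card = exM s p := by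
      rw [exM, exList, Finset.length_sort]
    have hinj : Set.InjOn p ((Finset.range s.length).filter (fun i => IsExceeding s p i)) := by
      intro a ha b hb hab
      exact exc_uniq s p (Finset.mem_filter.mp ha).2 (Finset.mem_filter.mp hb).2 hab
    have hcard_img : (((Finset.range s.length).filter (fun i => IsExceeding s p i)).image p).card
        = exM s p := by
      rw [Finset.card_image_of_injOn hinj, hMcard]
    have hsubimg : ((Finset.range s.length).filter (fun i => IsExceeding s p i)).image p
        ⊆ (Finset.range s.length).image p :=
      Finset.image_subset_image (Finset.filter_subset _ _)
    have hMle : exM s p ≤ m := by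
      rw [← hm, cost, ← hcard_img]
      exact Finset.card_le_card hsubimg
    have hq_sub : (Finset.range s.length).image (pack s p k) ⊆
        ((Finset.range s.length).image p \
            ((Finset.range s.length).filter (fun i => IsExceeding s p i)).image p).image
          (fun b => 2 * b) ∪
        (Finset.range (exM s p + exg s p k)).image (fun r => 2 * r + 1) := by
      intro x hx
      obtain ⟨j, hj, hxj⟩ := Finset.mem_image.mp hx
      have hjn : j < s.length := Finset.mem_range.mp hj
      by_cases hexcj : IsExceeding s p j
      · obtain ⟨hidx, hget⟩ := getL_indexOf s p hexcj
        apply Finset.mem_union_right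
        by_cases hgle : exg s p k ≤ (exList s p).idxOf j
        · refine Finset.mem_image.mpr ⟨(exList s p).idxOf j - exg s p k,
            Finset.mem_range.mpr (by omega), ?_⟩
          rw [← hxj, pack, if_pos hexcj, if_pos hgle]
        · refine Finset.mem_image.mpr ⟨exM s p + (exList s p).idxOf j,
            Finset.mem_range.mpr (by omega), ?_⟩
          rw [← hxj, pack, if_pos hexcj, if_neg hgle]
      · by_cases hb : ∃ i', IsExceeding s p i' ∧ p i' = p j
        · obtain ⟨hwexc, hwp⟩ := wit_spec s p hb
          obtain ⟨hwidx, hwget⟩ := getL_indexOf s p hwexc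
          apply Finset.mem_union_right
          refine Finset.mem_image.mpr ⟨(exList s p).idxOf (wit s p j),
            Finset.mem_range.mpr (by omega), ?_⟩
          rw [← hxj, pack, if_neg hexcj, if_pos hb]
        · apply Finset.mem_union_left
          refine Finset.mem_image.mpr ⟨p j, ?_, ?_⟩
          · rw [Finset.mem_sdiff]
            refine ⟨Finset.mem_image_of_mem p hj, ?_⟩
            intro hcon
            obtain ⟨i', hi', hpi'⟩ := Finset.mem_image.mp hcon
            exact hb ⟨i', (Finset.mem_filter.mp hi').2, hpi'⟩
          · rw [← hxj, pack, if_neg hexcj, if_neg hb]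
    have hnat : cost s (pack s p k) ≤ (m - exM s p) + (exM s p + exg s p k) := by
      rw [cost]
      calc ((Finset.range s.length).image (pack s p k)).card
          ≤ _ := Finset.card_le_card hq_sub
        _ ≤ _ := Finset.card_union_le _ _
        _ ≤ (m - exM s p) + (exM s p + exg s p k) := by
            apply Nat.add_le_add
            · calc _ ≤ ((Finset.range s.length).image p \
                  ((Finset.range s.length).filter (fun i => IsExceeding s p i)).image p).card :=
                    Finset.card_image_le
                _ = _ := by
                    rw [Finset.card_sdiff_of_subset hsubimg, hcard_img, ← hm, cost]
            · calc _ ≤ (Finset.range (exM s p + exg s p k)).card := Finset.card_image_le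
                _ = _ := Finset.card_range _
    -- pass to the reals
    have hkR : (3:ℝ) ≤ (k:ℝ) := by exact_mod_cast hk
    have hkR0 : (0:ℝ) < (k:ℝ) := by linarith
    have h1ε : 1/ε = (k:ℝ) := by rw [hεk]; field_simp
    have hcostR : (cost s (pack s p k) : ℝ) ≤ (m : ℝ) + (exg s p k : ℝ) := by
      calc (cost s (pack s p k) : ℝ) ≤ (((m - exM s p) + (exM s p + exg s p k) : ℕ) : ℝ) :=
            Nat.cast_le.mpr hnat
        _ = (m : ℝ) + (exg s p k : ℝ) := by
            rw [Nat.cast_add, Nat.cast_add, Nat.cast_sub hMle]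
            ring
    have hgR : (exg s p k : ℝ) ≤ (m : ℝ)/(k:ℝ) + 1 := by
      have hc1 : (exg s p k : ℝ) ≤ ((exM s p + k - 1 : ℕ) : ℝ) / (k : ℝ) := Nat.cast_div_le
      have hc2 : ((exM s p + k - 1 : ℕ) : ℝ) = (exM s p : ℝ) + (k:ℝ) - 1 := by
        rw [Nat.cast_sub (by omega), Nat.cast_add]
        norm_num
      have hc3 : (exM s p : ℝ) ≤ (m : ℝ) := Nat.cast_le.mpr hMle
      rw [hc2] at hc1
      calc (exg s p k : ℝ) ≤ ((exM s p : ℝ) + (k:ℝ) - 1) / (k:ℝ) := hc1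
        _ ≤ ((m:ℝ) + (k:ℝ) - 1) / (k:ℝ) := by
            exact (div_le_div_iff_of_pos_right hkR0).mpr (by linarith)
        _ = (m:ℝ)/(k:ℝ) + ((k:ℝ) - 1)/(k:ℝ) := by ring
        _ ≤ (m:ℝ)/(k:ℝ) + 1 := by
            have : ((k:ℝ) - 1)/(k:ℝ) ≤ 1 := by
              rw [div_le_one hkR0]; linarith
            linarith
    have hfin : (1 + ε) * (m:ℝ) + 1/ε = (m:ℝ) + (m:ℝ)/(k:ℝ) + (k:ℝ) := by
      rw [h1ε, hεk]
      field_simp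
    rw [hfin]
    have hm0 : (0:ℝ) ≤ (m:ℝ) := Nat.cast_nonneg _
    linarith


end

end OOEBP
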